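/- arXiv:2209.00391 — 2 statements merged into one kernel-verified Lean document; each statement's English description precedes it below -/
import Mathlib

section
/- Let Π ∈ ℝ^{m×n} have rank at most K+1, with singular value decomposition Π = UΣVᵀ, U = (U₁,U₂), V = (V₁,V₂) where columns of U₂, V₂ correspond to zero singular values. For Δ ∈ ℝ^{m×n}, define P(Δ) = U₂U₂ᵀ Δ V₂V₂ᵀ and M(Δ) = Δ − P(Δ). Then rank(M(Δ)) ≤ 2(K+1). -/
open Matrix BigOperators

noncomputable def frobNorm {m n : Type*} [Fintype m] [Fintype n] (A : Matrix m n ℝ) : ℝ :=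
  Real.sqrt (∑ i, ∑ j, (A i j) ^ 2)

noncomputable def nuclearNorm {m n : Type*} [Fintype m] [Fintype n] [DecidableEq n]
    (A : Matrix m n ℝ) : ℝ :=
  ∑ j, Real.sqrt ((Matrix.isHermitian_conjTranspose_mul_self A).eigenvalues j)

noncomputable def opNorm {m n : Type*} [Fintype m] [Fintype n] [DecidableEq n]
    (A : Matrix m n ℝ) : ℝ :=
  ‖LinearMap.toContinuousLinearMap (Matrix.toEuclideanLin A)‖

lemma matrix_rank_add_le {m n : Type*} [Fintype m] [Fintype n] [DecidableEq n]
    (A B : Matrix m n ℝ) : (A + B).rank ≤ A.rank + B.rank := by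
  rw [Matrix.rank, Matrix.rank, Matrix.rank, Matrix.mulVecLin_add]
  have h : LinearMap.range (A.mulVecLin + B.mulVecLin) ≤
      LinearMap.range A.mulVecLin ⊔ LinearMap.range B.mulVecLin := by
    rintro x ⟨y, rfl⟩
    exact Submodule.add_mem_sup ⟨y, rfl⟩ ⟨y, rfl⟩
  exact (Submodule.finrank_mono h).trans
    (Submodule.finrank_add_le_finrank_add_finrank _ _)

/-- If Π has rank at most K+1, with SVD structure as described (columns of U₂, V₂ corresponding
to zero singular values), then M(Δ) = Δ − P(Δ) has rank at most 2(K+1). -/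
theorem rank_M_le
    {m n k m₂ n₂ : Type*} [Fintype m] [Fintype n] [Fintype k] [Fintype m₂] [Fintype n₂]
    [DecidableEq m] [DecidableEq n] [DecidableEq k] [DecidableEq m₂] [DecidableEq n₂]
    (Pi0 : Matrix m n ℝ)
    (U₁ : Matrix m k ℝ) (U₂ : Matrix m m₂ ℝ) (V₁ : Matrix n k ℝ) (V₂ : Matrix n n₂ ℝ)
    (Sig : Matrix k k ℝ)
    (hU1 : U₁ᵀ * U₁ = 1) (hU2 : U₂ᵀ * U₂ = 1) (hU12 : U₁ᵀ * U₂ = 0)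
    (hUc : U₁ * U₁ᵀ + U₂ * U₂ᵀ = 1)
    (hV1 : V₁ᵀ * V₁ = 1) (hV2 : V₂ᵀ * V₂ = 1) (hV12 : V₁ᵀ * V₂ = 0)
    (hVc : V₁ * V₁ᵀ + V₂ * V₂ᵀ = 1)
    (hdiag : ∀ i j, i ≠ j → Sig i j = 0) (hnz : ∀ i, Sig i i ≠ 0)
    (hSVD : Pi0 = U₁ * Sig * V₁ᵀ)
    (K : ℕ) (hK : Pi0.rank ≤ K + 1)
    (Δ : Matrix m n ℝ) :
    (Δ - U₂ * U₂ᵀ * Δ * (V₂ * V₂ᵀ)).rank ≤ 2 * (K + 1) := by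
  -- step 1: card k ≤ K + 1
  have hSig : Sig = Matrix.diagonal (fun i => Sig i i) := by
    ext i j
    by_cases h : i = j
    · subst h; simp
    · rw [hdiag i j h, Matrix.diagonal_apply_ne _ h]
  have hSigR : Sig.rank = Fintype.card k := by
    rw [hSig, Matrix.rank_diagonal]
    exact Fintype.card_congr (Equiv.subtypeUnivEquiv hnz)
  have hSigPi : Sig = U₁ᵀ * Pi0 * V₁ := by
    rw [hSVD]
    symm
    calc U₁ᵀ * (U₁ * Sig * V₁ᵀ) * V₁ = U₁ᵀ * U₁ * Sig * (V₁ᵀ * V₁) := by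
          simp only [Matrix.mul_assoc]
      _ = Sig := by rw [hU1, hV1, one_mul, mul_one]
  have hcard : Fintype.card k ≤ K + 1 := by
    rw [← hSigR]
    calc Sig.rank = (U₁ᵀ * Pi0 * V₁).rank := by rw [← hSigPi]
      _ ≤ (U₁ᵀ * Pi0).rank := Matrix.rank_mul_le_left _ _
      _ ≤ Pi0.rank := Matrix.rank_mul_le_right _ _
      _ ≤ K + 1 := hK
  -- step 2: rewrite M
  have hU₂ : U₂ * U₂ᵀ = 1 - U₁ * U₁ᵀ := by
    rw [← hUc]; abel
  have hV₂ : V₂ * V₂ᵀ = 1 - V₁ * V₁ᵀ := by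
    rw [← hVc]; abel
  have key : Δ - U₂ * U₂ᵀ * Δ * (V₂ * V₂ᵀ) =
      U₁ * (U₁ᵀ * Δ) + (U₂ * U₂ᵀ * Δ * V₁) * V₁ᵀ := by
    rw [hV₂, hU₂]
    simp only [Matrix.sub_mul, Matrix.mul_sub, Matrix.one_mul, Matrix.mul_one, Matrix.mul_assoc]
    abel
  rw [key]
  calc (U₁ * (U₁ᵀ * Δ) + (U₂ * U₂ᵀ * Δ * V₁) * V₁ᵀ).rank
      ≤ (U₁ * (U₁ᵀ * Δ)).rank + ((U₂ * U₂ᵀ * Δ * V₁) * V₁ᵀ).rank :=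
        matrix_rank_add_le _ _
    _ ≤ Fintype.card k + Fintype.card k := by
        refine add_le_add ?_ ?_
        · exact (Matrix.rank_mul_le_right _ _).trans
            ((U₁ᵀ * Δ).rank_le_card_height)
        · exact (Matrix.rank_mul_le_left _ _).trans
            ((U₂ * U₂ᵀ * Δ * V₁).rank_le_card_width)
    _ ≤ 2 * (K + 1) := by omega
end

section
/- Let Y ∈ ℝ^{N×T} with SVD Y = UΣVᵀ, and for x > 0 define the soft-thresholding operator S_x(Y) = UΣ_xVᵀ where Σ_x replaces each singular value σ_j by max{0, σ_j − x}. Then S_{λ/2}(Y) is the unique minimizer over Γ ∈ ℝ^{N×T} of (1/2)‖Y − Γ‖_F² + (λ/2)‖Γ‖₊. -/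
open Matrix BigOperators

section Aux

open Polynomial

lemma aux_orth_mulVec {n m : ℕ} (P : Matrix (Fin m) (Fin n) ℝ) (hP : Pᵀ * P = 1)
    (w : Fin n → ℝ) : ∑ i, ((P *ᵥ w) i) ^ 2 = ∑ j, (w j) ^ 2 := by
  have h2 : (P *ᵥ w) ⬝ᵥ (P *ᵥ w) = w ⬝ᵥ w := by
    rw [Matrix.dotProduct_mulVec, ← Matrix.mulVec_transpose, Matrix.mulVec_mulVec, hP,
      Matrix.one_mulVec]
  simpa [dotProduct, pow_two] using h2

lemma aux_charpoly_conj {n : ℕ} (P M : Matrix (Fin n) (Fin n) ℝ) (hP : Pᵀ * P = 1) :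
    (P * M * Pᵀ).charpoly = M.charpoly := by
  have hP2 : P * Pᵀ = 1 := mul_eq_one_comm.mp hP
  set F := (C : ℝ →+* ℝ[X]).mapMatrix (m := Fin n) with hF
  have key : charmatrix (P * M * Pᵀ) = F P * charmatrix M * F Pᵀ := by
    unfold Matrix.charmatrix
    rw [Matrix.mul_sub, Matrix.sub_mul]
    congr 1
    · have hc : F P * (Matrix.scalar (Fin n)) X = (Matrix.scalar (Fin n)) X * F P :=
        (Matrix.scalar_commute X (fun r => Commute.all _ _) (F P)).symm
      rw [Matrix.scalar_apply] at hc ⊢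
      rw [hc, mul_assoc, ← map_mul F, hP2, _root_.map_one F]
      simp
    · rw [← map_mul F, ← map_mul F]
  rw [Matrix.charpoly, key, Matrix.det_mul, Matrix.det_mul, mul_comm, ← mul_assoc, ← Matrix.det_mul,
    ← map_mul F, hP, _root_.map_one F, Matrix.det_one, one_mul, Matrix.charpoly]

lemma aux_charpoly_diagonal {n : ℕ} (d : Fin n → ℝ) :
    (Matrix.diagonal d).charpoly = ∏ j, (X - C (d j)) := by
  rw [Matrix.charpoly]
  have : charmatrix (Matrix.diagonal d) = Matrix.diagonal (fun j => X - C (d j)) := by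
    ext i j
    by_cases h : i = j
    · subst h; simp [Matrix.charmatrix_apply_eq]
    · simp [Matrix.charmatrix_apply_ne _ _ _ h, Matrix.diagonal_apply_ne _ h,
        Matrix.diagonal_apply_ne', h]
  rw [this, Matrix.det_diagonal]

lemma aux_charpoly_hermitian {n : ℕ} {H : Matrix (Fin n) (Fin n) ℝ} (hH : H.IsHermitian) :
    H.charpoly = ∏ j, (X - C (hH.eigenvalues j)) := by
  have hQ := hH.spectral_theorem
  set Q : Matrix (Fin n) (Fin n) ℝ := (hH.eigenvectorUnitary : Matrix (Fin n) (Fin n) ℝ) with hQdef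
  have hstar : star Q = Qᵀ := by
    rw [Matrix.star_eq_conjTranspose, Matrix.conjTranspose_eq_transpose_of_trivial]
  have hQ1 : Qᵀ * Q = 1 := by
    rw [← hstar]; exact Unitary.coe_star_mul_self hH.eigenvectorUnitary
  have hdiag : Matrix.diagonal (RCLike.ofReal ∘ hH.eigenvalues) = Matrix.diagonal hH.eigenvalues := by
    congr 1
  rw [Unitary.conjStarAlgAut_apply, ← hQdef, hstar, hdiag] at hQ
  conv_lhs => rw [hQ]
  rw [aux_charpoly_conj _ _ hQ1, aux_charpoly_diagonal]

lemma aux_eig_sum {n : ℕ} {H : Matrix (Fin n) (Fin n) ℝ} (hH : H.IsHermitian)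
    (P : Matrix (Fin n) (Fin n) ℝ) (hP : Pᵀ * P = 1) (d : Fin n → ℝ)
    (hHP : H = P * Matrix.diagonal d * Pᵀ) (f : ℝ → ℝ) :
    ∑ j, f (hH.eigenvalues j) = ∑ j, f (d j) := by
  have h1 : ∏ j, (X - C (hH.eigenvalues j)) = ∏ j, (X - C (d j)) := by
    rw [← aux_charpoly_hermitian hH, hHP, aux_charpoly_conj _ _ hP, aux_charpoly_diagonal]
  have h2 : (Finset.univ.val.map hH.eigenvalues) = (Finset.univ.val.map d) := by
    have r1 := Polynomial.roots_multiset_prod_X_sub_C (Finset.univ.val.map hH.eigenvalues)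
    have r2 := Polynomial.roots_multiset_prod_X_sub_C (Finset.univ.val.map d)
    rw [← r1, ← r2]
    congr 1
    rw [Multiset.map_map, Multiset.map_map]
    simpa [Finset.prod_eq_multiset_prod] using h1
  calc ∑ j, f (hH.eigenvalues j) = ((Finset.univ.val.map hH.eigenvalues).map f).sum := by
        simp [Finset.sum_eq_multiset_sum, Multiset.map_map]; rfl
    _ = ((Finset.univ.val.map d).map f).sum := by rw [h2]
    _ = ∑ j, f (d j) := by simp [Finset.sum_eq_multiset_sum, Multiset.map_map]; rfl

lemma aux_schur {N T : ℕ} (D : Matrix (Fin N) (Fin T) ℝ) (c : ℝ) (hc : 0 ≤ c)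
    (hD : ∀ i j, 0 ≤ D i j) (hrow : ∀ i, ∑ j, D i j ≤ c) (hcol : ∀ j, ∑ i, D i j ≤ c)
    (w : Fin T → ℝ) : ∑ i, ((D *ᵥ w) i) ^ 2 ≤ c ^ 2 * ∑ j, (w j) ^ 2 := by
  have step1 : ∀ i, ((D *ᵥ w) i) ^ 2 ≤ c * ∑ j, D i j * (w j) ^ 2 := by
    intro i
    have cs : (∑ j, Real.sqrt (D i j) * (Real.sqrt (D i j) * w j)) ^ 2 ≤
        (∑ j, Real.sqrt (D i j) ^ 2) * ∑ j, (Real.sqrt (D i j) * w j) ^ 2 :=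
      Finset.sum_mul_sq_le_sq_mul_sq _ _ _
    have e1 : ∀ j, Real.sqrt (D i j) * (Real.sqrt (D i j) * w j) = D i j * w j := by
      intro j; rw [← mul_assoc, Real.mul_self_sqrt (hD i j)]
    have e2 : ∀ j, Real.sqrt (D i j) ^ 2 = D i j := fun j => Real.sq_sqrt (hD i j)
    have e3 : ∀ j, (Real.sqrt (D i j) * w j) ^ 2 = D i j * w j ^ 2 := by
      intro j; rw [mul_pow, e2]
    simp only [e1, e2, e3] at cs
    calc ((D *ᵥ w) i) ^ 2 = (∑ j, D i j * w j) ^ 2 := by rfl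
      _ ≤ (∑ j, D i j) * ∑ j, D i j * w j ^ 2 := cs
      _ ≤ c * ∑ j, D i j * w j ^ 2 := by
          apply mul_le_mul_of_nonneg_right (hrow i)
          exact Finset.sum_nonneg fun j _ => mul_nonneg (hD i j) (sq_nonneg _)
  calc ∑ i, ((D *ᵥ w) i) ^ 2 ≤ ∑ i, c * ∑ j, D i j * (w j) ^ 2 :=
        Finset.sum_le_sum fun i _ => step1 i
    _ = c * ∑ j, (∑ i, D i j) * (w j) ^ 2 := by
        rw [← Finset.mul_sum, Finset.sum_comm]
        simp_rw [Finset.sum_mul]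
    _ ≤ c * ∑ j, c * (w j) ^ 2 := by
        apply mul_le_mul_of_nonneg_left _ hc
        exact Finset.sum_le_sum fun j _ =>
          mul_le_mul_of_nonneg_right (hcol j) (sq_nonneg _)
    _ = c ^ 2 * ∑ j, (w j) ^ 2 := by rw [← Finset.mul_sum, ← mul_assoc, pow_two]

lemma aux_diag_sum_le {n : ℕ} (k : ℕ) (g : Fin n → ℝ) (c : ℝ) (hc : 0 ≤ c)
    (hg0 : ∀ j : Fin n, (j : ℕ) ≠ k → g j = 0) (hgc : ∀ j, g j ≤ c) :
    ∑ j, g j ≤ c := by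
  by_cases h : k < n
  · rw [Finset.sum_eq_single (⟨k, h⟩ : Fin n)]
    · exact hgc _
    · intro b _ hb
      exact hg0 b (fun hbk => hb (Fin.ext hbk))
    · simp
  · rw [Finset.sum_eq_zero] <;> try exact hc
    intro j _
    exact hg0 j (fun hj => h (hj ▸ j.isLt))

lemma aux_diag_sqrt_sum {n : ℕ} (k : ℕ) (g : Fin n → ℝ) (hg : ∀ j, 0 ≤ g j)
    (hg0 : ∀ j : Fin n, (j : ℕ) ≠ k → g j = 0) :
    Real.sqrt (∑ j, g j ^ 2) = ∑ j, g j := by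
  by_cases h : k < n
  · have h1 : ∑ j, g j ^ 2 = g ⟨k, h⟩ ^ 2 := by
      apply Finset.sum_eq_single
      · intro b _ hb; rw [hg0 b (fun hbk => hb (Fin.ext hbk))]; ring
      · simp
    have h2 : ∑ j, g j = g ⟨k, h⟩ := by
      apply Finset.sum_eq_single
      · intro b _ hb; exact hg0 b (fun hbk => hb (Fin.ext hbk))
      · simp
    rw [h1, h2, Real.sqrt_sq (hg _)]
  · have h2 : ∑ j, g j = 0 := Finset.sum_eq_zero fun j _ => hg0 j (fun hj => h (hj ▸ j.isLt))
    have h1 : ∑ j, g j ^ 2 = 0 := Finset.sum_eq_zero fun j _ => by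
      rw [hg0 j (fun hj => h (hj ▸ j.isLt))]; ring
    rw [h1, h2, Real.sqrt_zero]

lemma aux_key {N T : ℕ} (W Γ : Matrix (Fin N) (Fin T) ℝ) (c : ℝ) (hc : 0 ≤ c)
    (hW : ∀ w : Fin T → ℝ, ∑ i, ((W *ᵥ w) i) ^ 2 ≤ c ^ 2 * ∑ j, (w j) ^ 2) :
    ∑ i, ∑ j, W i j * Γ i j ≤ c * nuclearNorm Γ := by
  set hH := Matrix.isHermitian_conjTranspose_mul_self Γ with hHdef
  set μ := hH.eigenvalues with hμdef
  set Q : Matrix (Fin T) (Fin T) ℝ := (hH.eigenvectorUnitary : Matrix (Fin T) (Fin T) ℝ) with hQdef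
  have hstar : star Q = Qᵀ := by
    rw [Matrix.star_eq_conjTranspose, Matrix.conjTranspose_eq_transpose_of_trivial]
  have hQ1 : Qᵀ * Q = 1 := by rw [← hstar]; exact Unitary.coe_star_mul_self hH.eigenvectorUnitary
  have hQ2 : Q * Qᵀ = 1 := mul_eq_one_comm.mp hQ1
  have hΓH : Γᴴ = Γᵀ := Matrix.conjTranspose_eq_transpose_of_trivial Γ
  have hdQ : Qᵀ * (Γᵀ * Γ) * Q = Matrix.diagonal μ := by
    have := hH.conjStarAlgAut_star_eigenvectorUnitary
    rw [Unitary.conjStarAlgAut_star_apply, ← hQdef, hstar] at this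
    rw [← hΓH]
    convert this using 2 <;> rfl
  set A := W * Q with hA
  set B := Γ * Q with hB
  have t1 : ∑ i, ∑ j, W i j * Γ i j = Matrix.trace (Wᵀ * Γ) := by
    rw [Finset.sum_comm]
    simp [Matrix.trace, Matrix.diag, Matrix.mul_apply]
  have t2 : Matrix.trace (Wᵀ * Γ) = ∑ j, ∑ i, A i j * B i j := by
    have e : Aᵀ * B = Qᵀ * Wᵀ * (Γ * Q) := by rw [hA, hB, Matrix.transpose_mul]
    have tr : Matrix.trace (Aᵀ * B) = Matrix.trace (Wᵀ * Γ) := by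
      rw [e, show Qᵀ * Wᵀ * (Γ * Q) = Qᵀ * (Wᵀ * Γ * Q) by simp only [Matrix.mul_assoc],
        Matrix.trace_mul_comm, mul_assoc, hQ2, mul_one]
    rw [← tr]
    simp [Matrix.trace, Matrix.diag, Matrix.mul_apply]
  have hBsq : ∀ j, ∑ i, B i j ^ 2 = μ j := by
    intro j
    have e : Bᵀ * B = Matrix.diagonal μ := by
      rw [hB, Matrix.transpose_mul,
        show Qᵀ * Γᵀ * (Γ * Q) = Qᵀ * (Γᵀ * Γ) * Q by simp only [Matrix.mul_assoc], hdQ]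
    have := congrFun (congrFun e j) j
    simp only [Matrix.mul_apply, Matrix.transpose_apply, Matrix.diagonal_apply_eq] at this
    rw [← this]
    congr 1; ext i; ring
  have hQsq : ∀ j, ∑ i, Q i j ^ 2 = 1 := by
    intro j
    have := congrFun (congrFun hQ1 j) j
    simp only [Matrix.mul_apply, Matrix.transpose_apply, Matrix.one_apply_eq] at this
    rw [← this]
    congr 1; ext i; ring
  have perj : ∀ j, ∑ i, A i j * B i j ≤ c * Real.sqrt (μ j) := by
    intro j
    have hAv : (fun i => A i j) = W *ᵥ (fun k => Q k j) := by
      funext i; simp [hA, Matrix.mul_apply, Matrix.mulVec, dotProduct]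
    have ha : ∑ i, A i j ^ 2 ≤ c ^ 2 := by
      have := hW (fun k => Q k j)
      rw [hQsq j, mul_one] at this
      calc ∑ i, A i j ^ 2 = ∑ i, ((W *ᵥ fun k => Q k j) i) ^ 2 := by rw [← hAv]
        _ ≤ c ^ 2 := this
    have cs : ∑ i, A i j * B i j ≤
        Real.sqrt (∑ i, A i j ^ 2) * Real.sqrt (∑ i, B i j ^ 2) :=
      Real.sum_mul_le_sqrt_mul_sqrt _ _ _
    calc ∑ i, A i j * B i j ≤ Real.sqrt (∑ i, A i j ^ 2) * Real.sqrt (∑ i, B i j ^ 2) := cs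
      _ ≤ Real.sqrt (c ^ 2) * Real.sqrt (∑ i, B i j ^ 2) := by
          apply mul_le_mul_of_nonneg_right (Real.sqrt_le_sqrt ha) (Real.sqrt_nonneg _)
      _ = c * Real.sqrt (μ j) := by rw [Real.sqrt_sq hc, hBsq j]
  calc ∑ i, ∑ j, W i j * Γ i j = ∑ j, ∑ i, A i j * B i j := by rw [t1, t2]
    _ ≤ ∑ j, c * Real.sqrt (μ j) := Finset.sum_le_sum fun j _ => perj j
    _ = c * nuclearNorm Γ := by rw [← Finset.mul_sum]; rfl

lemma aux_nn_diag {N T : ℕ} (U : Matrix (Fin N) (Fin N) ℝ) (V : Matrix (Fin T) (Fin T) ℝ)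
    (E : Matrix (Fin N) (Fin T) ℝ) (hU : Uᵀ * U = 1) (hV : Vᵀ * V = 1)
    (hE0 : ∀ (i : Fin N) (j : Fin T), (i : ℕ) ≠ (j : ℕ) → E i j = 0)
    (hEnn : ∀ i j, 0 ≤ E i j) :
    nuclearNorm (U * E * Vᵀ) = ∑ j, ∑ i, E i j := by
  set M := U * E * Vᵀ with hM
  set d : Fin T → ℝ := fun j => ∑ i, E i j ^ 2 with hd
  have hEtE : Eᵀ * E = Matrix.diagonal d := by
    ext j j'
    by_cases h : j = j'
    · subst h
      simp only [Matrix.mul_apply, Matrix.transpose_apply, Matrix.diagonal_apply_eq, hd]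
      congr 1; ext i; ring
    · rw [Matrix.diagonal_apply_ne _ h]
      simp only [Matrix.mul_apply, Matrix.transpose_apply]
      apply Finset.sum_eq_zero
      intro i _
      by_cases hi : (i : ℕ) = (j : ℕ)
      · rw [hE0 i j' (by rw [hi]; exact fun hh => h (Fin.ext hh)), mul_zero]
      · rw [hE0 i j hi, zero_mul]
  have hdecomp : Mᴴ * M = V * Matrix.diagonal d * Vᵀ := by
    rw [Matrix.conjTranspose_eq_transpose_of_trivial, hM, Matrix.transpose_mul,
      Matrix.transpose_mul, Matrix.transpose_transpose, ← hEtE]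
    calc V * (Eᵀ * Uᵀ) * (U * E * Vᵀ) = V * (Eᵀ * (Uᵀ * U) * E) * Vᵀ := by
          simp only [Matrix.mul_assoc]
      _ = V * (Eᵀ * E) * Vᵀ := by rw [hU, Matrix.mul_one]
  have h1 : nuclearNorm M = ∑ j, Real.sqrt (d j) :=
    aux_eig_sum (Matrix.isHermitian_conjTranspose_mul_self M) V hV d hdecomp Real.sqrt
  rw [h1]
  apply Finset.sum_congr rfl
  intro j _
  exact aux_diag_sqrt_sum (j : ℕ) (fun i => E i j) (fun i => hEnn i j)
    (fun i hi => hE0 i j hi)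

lemma aux_ip_conj {N T : ℕ} (U : Matrix (Fin N) (Fin N) ℝ) (V : Matrix (Fin T) (Fin T) ℝ)
    (A B : Matrix (Fin N) (Fin T) ℝ) (hU : Uᵀ * U = 1) (hV : Vᵀ * V = 1) :
    ∑ i, ∑ j, (U * A * Vᵀ) i j * (U * B * Vᵀ) i j = ∑ i, ∑ j, A i j * B i j := by
  have t : ∀ (X Z : Matrix (Fin N) (Fin T) ℝ),
      ∑ i, ∑ j, X i j * Z i j = Matrix.trace (Xᵀ * Z) := by
    intro X Z
    rw [Finset.sum_comm]
    simp [Matrix.trace, Matrix.diag, Matrix.mul_apply]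
  rw [t, t]
  have key : (U * A * Vᵀ)ᵀ * (U * B * Vᵀ) = V * ((Aᵀ * B) * Vᵀ) := by
    rw [Matrix.transpose_mul, Matrix.transpose_mul, Matrix.transpose_transpose]
    simp only [Matrix.mul_assoc]
    rw [← Matrix.mul_assoc Uᵀ U, hU, Matrix.one_mul]
  rw [key, Matrix.trace_mul_comm, Matrix.mul_assoc, hV, Matrix.mul_one]

end Aux

/-- Singular value soft-thresholding: if Y = UΣVᵀ is an SVD, then
S_{λ/2}(Y) = UΣ_{λ/2}Vᵀ (each singular value σ replaced by max{0, σ − λ/2}) is the unique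
minimizer of Γ ↦ (1/2)‖Y − Γ‖_F² + (λ/2)‖Γ‖₊. -/
theorem soft_thresholding_prox
    (N T : ℕ) (Y : Matrix (Fin N) (Fin T) ℝ)
    (U : Matrix (Fin N) (Fin N) ℝ) (V : Matrix (Fin T) (Fin T) ℝ)
    (Sig : Matrix (Fin N) (Fin T) ℝ)
    (hU : Uᵀ * U = 1) (hV : Vᵀ * V = 1)
    (hdiag : ∀ (i : Fin N) (j : Fin T), (i : ℕ) ≠ (j : ℕ) → Sig i j = 0)
    (hnonneg : ∀ (i : Fin N) (j : Fin T), 0 ≤ Sig i j)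
    (hdesc : ∀ (i i' : Fin N) (j j' : Fin T),
      (i : ℕ) = (j : ℕ) → (i' : ℕ) = (j' : ℕ) → i ≤ i' → Sig i' j' ≤ Sig i j)
    (hSVD : Y = U * Sig * Vᵀ)
    (lam : ℝ) (hlam : 0 < lam)
    (Sx : Matrix (Fin N) (Fin T) ℝ)
    (hSx : Sx = U * (Matrix.of fun (i : Fin N) (j : Fin T) => max 0 (Sig i j - lam / 2)) * Vᵀ) :
    (∀ Γ : Matrix (Fin N) (Fin T) ℝ,
        (1 / 2) * frobNorm (Y - Sx) ^ 2 + lam / 2 * nuclearNorm Sx ≤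
          (1 / 2) * frobNorm (Y - Γ) ^ 2 + lam / 2 * nuclearNorm Γ) ∧
      ∀ Γ : Matrix (Fin N) (Fin T) ℝ,
        (1 / 2) * frobNorm (Y - Γ) ^ 2 + lam / 2 * nuclearNorm Γ =
          (1 / 2) * frobNorm (Y - Sx) ^ 2 + lam / 2 * nuclearNorm Sx → Γ = Sx := by
  set c := lam / 2 with hcdef
  have hc : 0 ≤ c := by positivity
  set E : Matrix (Fin N) (Fin T) ℝ :=
    Matrix.of fun (i : Fin N) (j : Fin T) => max 0 (Sig i j - c) with hE
  set D : Matrix (Fin N) (Fin T) ℝ := Sig - E with hD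
  -- basic entry facts
  have hEapp : ∀ i j, E i j = max 0 (Sig i j - c) := fun i j => rfl
  have hDapp : ∀ i j, D i j = Sig i j - max 0 (Sig i j - c) := by
    intro i j; simp [hD, Matrix.sub_apply, hEapp]
  have hE0 : ∀ (i : Fin N) (j : Fin T), (i : ℕ) ≠ (j : ℕ) → E i j = 0 := by
    intro i j hij
    rw [hEapp, hdiag i j hij]
    simp [hc]
  have hEnn : ∀ i j, 0 ≤ E i j := by intro i j; rw [hEapp]; exact le_max_left _ _
  have hD0 : ∀ (i : Fin N) (j : Fin T), (i : ℕ) ≠ (j : ℕ) → D i j = 0 := by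
    intro i j hij
    rw [hDapp, hdiag i j hij]
    simp [hc]
  have hDnn : ∀ i j, 0 ≤ D i j := by
    intro i j
    rw [hDapp, sub_nonneg, max_le_iff]
    exact ⟨hnonneg i j, by linarith⟩
  have hDle : ∀ i j, D i j ≤ c := by
    intro i j
    rw [hDapp]
    rcases le_total (Sig i j - c) 0 with h | h
    · rw [max_eq_left h]; linarith
    · rw [max_eq_right h]; linarith
  -- W = Y - Sx
  have hW : Y - Sx = U * D * Vᵀ := by
    rw [hSVD, hSx, hD, Matrix.mul_sub, Matrix.sub_mul]
  -- operator bound for W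
  have hVt : (Vᵀ)ᵀ * Vᵀ = 1 := by
    rw [Matrix.transpose_transpose]; exact mul_eq_one_comm.mp hV
  have hopn : ∀ w : Fin T → ℝ, ∑ i, (((Y - Sx) *ᵥ w) i) ^ 2 ≤ c ^ 2 * ∑ j, (w j) ^ 2 := by
    intro w
    rw [hW]
    rw [show (U * D * Vᵀ) *ᵥ w = U *ᵥ (D *ᵥ (Vᵀ *ᵥ w)) by
      rw [Matrix.mulVec_mulVec, Matrix.mulVec_mulVec]]
    rw [aux_orth_mulVec U hU]
    calc ∑ i, ((D *ᵥ (Vᵀ *ᵥ w)) i) ^ 2 ≤ c ^ 2 * ∑ j, ((Vᵀ *ᵥ w) j) ^ 2 := by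
          apply aux_schur D c hc hDnn _ _ _
          · intro i
            exact aux_diag_sum_le (i : ℕ) (fun j => D i j) c hc
              (fun j hj => hD0 i j (Ne.symm hj)) (fun j => hDle i j)
          · intro j
            exact aux_diag_sum_le (j : ℕ) (fun i => D i j) c hc
              (fun i hi => hD0 i j hi) (fun i => hDle i j)
      _ = c ^ 2 * ∑ j, (w j) ^ 2 := by rw [aux_orth_mulVec Vᵀ hVt]
  -- key inequality
  have hK : ∀ Γ : Matrix (Fin N) (Fin T) ℝ,
      ∑ i, ∑ j, (Y - Sx) i j * Γ i j ≤ c * nuclearNorm Γ :=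
    fun Γ => aux_key (Y - Sx) Γ c hc hopn
  -- nuclear norm of Sx
  have hnnSx : nuclearNorm Sx = ∑ j, ∑ i, E i j := by
    rw [hSx]
    exact aux_nn_diag U V E hU hV hE0 hEnn
  -- inner product equality
  have hip : ∑ i, ∑ j, (Y - Sx) i j * Sx i j = c * nuclearNorm Sx := by
    rw [hnnSx, hW, hSx, aux_ip_conj U V D E hU hV]
    rw [Finset.sum_comm, Finset.mul_sum]
    apply Finset.sum_congr rfl
    intro j _
    rw [Finset.mul_sum]
    apply Finset.sum_congr rfl
    intro i _
    rw [hDapp, hEapp]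
    rcases le_total (Sig i j - c) 0 with h | h
    · rw [max_eq_left h]; ring
    · rw [max_eq_right h]; ring
  -- Frobenius expansion
  have hfrob : ∀ Γ : Matrix (Fin N) (Fin T) ℝ,
      frobNorm (Y - Γ) ^ 2 = ∑ i, ∑ j, (Y i j - Γ i j) ^ 2 := by
    intro Γ
    rw [frobNorm, Real.sq_sqrt (by positivity)]
    apply Finset.sum_congr rfl; intro i _
    apply Finset.sum_congr rfl; intro j _
    rw [Matrix.sub_apply]
  -- main gap inequality
  have gap : ∀ Γ : Matrix (Fin N) (Fin T) ℝ,
      (1 / 2) * frobNorm (Y - Sx) ^ 2 + c * nuclearNorm Sx +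
        (1 / 2) * (∑ i, ∑ j, (Γ i j - Sx i j) ^ 2) ≤
      (1 / 2) * frobNorm (Y - Γ) ^ 2 + c * nuclearNorm Γ := by
    intro Γ
    have hK' := hK Γ
    have hsub : ∀ i j, (Y - Sx) i j = Y i j - Sx i j := by
      intro i j; rw [Matrix.sub_apply]
    have expand : ∑ i, ∑ j, (Y i j - Γ i j) ^ 2 =
        ∑ i, ∑ j, (Y i j - Sx i j) ^ 2 + ∑ i, ∑ j, (Γ i j - Sx i j) ^ 2
          - 2 * ∑ i, ∑ j, (Y i j - Sx i j) * (Γ i j - Sx i j) := by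
      rw [← Finset.sum_add_distrib, Finset.mul_sum, ← Finset.sum_sub_distrib]
      apply Finset.sum_congr rfl; intro i _
      rw [← Finset.sum_add_distrib, Finset.mul_sum, ← Finset.sum_sub_distrib]
      apply Finset.sum_congr rfl; intro j _
      ring
    have hsplit : ∑ i, ∑ j, (Y i j - Sx i j) * (Γ i j - Sx i j) =
        ∑ i, ∑ j, (Y - Sx) i j * Γ i j - ∑ i, ∑ j, (Y - Sx) i j * Sx i j := by
      rw [← Finset.sum_sub_distrib]
      apply Finset.sum_congr rfl; intro i _
      rw [← Finset.sum_sub_distrib]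
      apply Finset.sum_congr rfl; intro j _
      rw [hsub]; ring
    rw [hfrob Γ, hfrob Sx, expand, hsplit, hip]
    linarith
  constructor
  · intro Γ
    have := gap Γ
    have hnn : 0 ≤ (1 / 2) * (∑ i, ∑ j, (Γ i j - Sx i j) ^ 2) := by positivity
    linarith
  · intro Γ hEq
    have := gap Γ
    have hS0 : ∑ i, ∑ j, (Γ i j - Sx i j) ^ 2 ≤ 0 := by linarith
    have hSnn : 0 ≤ ∑ i, ∑ j, (Γ i j - Sx i j) ^ 2 := by positivity
    have hS : ∑ i, ∑ j, (Γ i j - Sx i j) ^ 2 = 0 := le_antisymm hS0 hSnn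
    ext i j
    have h1 : ∀ i ∈ Finset.univ, (0:ℝ) ≤ ∑ j, (Γ i j - Sx i j) ^ 2 :=
      fun i _ => Finset.sum_nonneg fun j _ => sq_nonneg _
    have h2 := (Finset.sum_eq_zero_iff_of_nonneg h1).mp hS i (Finset.mem_univ i)
    have h3 := (Finset.sum_eq_zero_iff_of_nonneg
      (fun j _ => sq_nonneg (Γ i j - Sx i j))).mp h2 j (Finset.mem_univ j)
    have := sq_eq_zero_iff.mp h3
    linarith
end
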